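/- Let i, j ∈ {0,1}, let h be a quaternion of norm 1, let (b₀, b₁) ∈ ℂ² with b_j ≠ 0, set q = b₀ + b₁·j, let (c₀, c₁) be the complex components of q·h with c_i ≠ 0, and for θ ∈ ℝ set h_θ = (q⁻¹·(cos θ + (sin θ)·i)·q)·h with complex components (c₀^θ, c₁^θ) of q·h_θ. Then c_i^θ ≠ 0 and σ_j(b₀, b₁)·h_θ·σ_i(c₀^θ, c₁^θ)⁻¹ = σ_j(b₀, b₁)·h·σ_i(c₀, c₁)⁻¹·(cos θ + (sin θ)·i); that is, the trivialising map 𝔗_{i,j} is equivariant for the circle action. -/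

import Mathlib

open Quaternion

noncomputable section

/-- The embedding of `ℂ` into the quaternions `ℍ` as the real span of `1` and `i`. -/
def cq (z : ℂ) : ℍ[ℝ] := ⟨z.re, z.im, 0, 0⟩

/-- The imaginary unit `j` of the quaternions. -/
def jq : ℍ[ℝ] := ⟨0, 0, 1, 0⟩

/-- `σ₀(a₀,a₁) = (1 + (a₁/a₀)·j)/‖1 + (a₁/a₀)·j‖`, defined for `a₀ ≠ 0`. -/
def sigma0 (a₀ a₁ : ℂ) : ℍ[ℝ] := ‖cq 1 + cq (a₁ / a₀) * jq‖⁻¹ • (cq 1 + cq (a₁ / a₀) * jq)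

/-- `σ₁(a₀,a₁) = (a₀/a₁ + j)/‖a₀/a₁ + j‖`, defined for `a₁ ≠ 0`. -/
def sigma1 (a₀ a₁ : ℂ) : ℍ[ℝ] := ‖cq (a₀ / a₁) + jq‖⁻¹ • (cq (a₀ / a₁) + jq)

/-- The complex components of a quaternion: `q = c₀ + c₁·j` with
`c₀ = re q + (im_i q)·i` and `c₁ = im_j q + (im_k q)·i`. -/
def comps (q : ℍ[ℝ]) : ℂ × ℂ := (⟨q.re, q.imI⟩, ⟨q.imJ, q.imK⟩)

/-- The complex projective line `ℂP¹`, as the projectivization of `ℂ²`. -/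
abbrev CP1 := Projectivization ℂ (ℂ × ℂ)

/-- The quotient topology on `ℂP¹`. -/
instance : TopologicalSpace CP1 := instTopologicalSpaceQuotient

/-- `σ_j` for `j ∈ {0,1}`. -/
def sigma' (j : Fin 2) (a₀ a₁ : ℂ) : ℍ[ℝ] := if j = 0 then sigma0 a₀ a₁ else sigma1 a₀ a₁

@[simp] lemma cq_re (z : ℂ) : (cq z).re = z.re := rfl
@[simp] lemma cq_imI (z : ℂ) : (cq z).imI = z.im := rfl
@[simp] lemma cq_imJ (z : ℂ) : (cq z).imJ = 0 := rfl
@[simp] lemma cq_imK (z : ℂ) : (cq z).imK = 0 := rfl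
@[simp] lemma jq_re : jq.re = 0 := rfl
@[simp] lemma jq_imI : jq.imI = 0 := rfl
@[simp] lemma jq_imJ : jq.imJ = 1 := rfl
@[simp] lemma jq_imK : jq.imK = 0 := rfl

lemma cq_mul (z w : ℂ) : cq (z * w) = cq z * cq w := by
  ext <;> simp [Complex.mul_re, Complex.mul_im]
lemma cq_one : cq 1 = 1 := by ext <;> simp [cq]
lemma cq_zero : cq 0 = 0 := by ext <;> simp [cq]
lemma cq_inv (z : ℂ) : (cq z)⁻¹ = cq z⁻¹ := by
  rcases eq_or_ne z 0 with rfl | hz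
  · simp [cq_zero]
  · exact inv_eq_of_mul_eq_one_right (by rw [← cq_mul, mul_inv_cancel₀ hz, cq_one])
lemma cq_real_smul (r : ℝ) (y : ℍ[ℝ]) : r • y = cq (r : ℂ) * y := by
  ext <;> simp
lemma decomp (x : ℍ[ℝ]) : cq (comps x).1 + cq (comps x).2 * jq = x := by
  ext <;> simp [comps]
lemma comps_cq_mul (z : ℂ) (x : ℍ[ℝ]) :
    comps (cq z * x) = (z * (comps x).1, z * (comps x).2) := by
  refine Prod.ext (Complex.ext ?_ ?_) (Complex.ext ?_ ?_) <;>
    simp [comps, Complex.mul_re, Complex.mul_im] <;> ring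

lemma sigma'_rep (i : Fin 2) (c₀ c₁ : ℂ) (x : ℍ[ℝ]) (hx : x = cq c₀ + cq c₁ * jq)
    (hc : (if i = 0 then c₀ else c₁) ≠ 0) :
    ∃ v : ℂ, v ≠ 0 ∧ sigma' i c₀ c₁ = cq v * x := by
  rcases eq_or_ne i 0 with rfl | hi
  · rw [if_pos rfl] at hc
    have key : cq 1 + cq (c₁ / c₀) * jq = cq c₀⁻¹ * x := by
      rw [hx, mul_add, ← mul_assoc, ← cq_mul, ← cq_mul, inv_mul_cancel₀ hc, inv_mul_eq_div]
    have hn : ‖cq c₀⁻¹ * x‖ ≠ 0 := by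
      rw [← key, norm_ne_zero_iff]
      intro h0
      have : (cq 1 + cq (c₁ / c₀) * jq).re = 1 := by simp
      rw [h0] at this; simp at this
    refine ⟨((‖cq c₀⁻¹ * x‖⁻¹ : ℝ) : ℂ) * c₀⁻¹,
      mul_ne_zero (Complex.ofReal_ne_zero.mpr (inv_ne_zero hn)) (inv_ne_zero hc), ?_⟩
    rw [sigma', if_pos rfl, sigma0, key, cq_real_smul, ← mul_assoc, ← cq_mul]
  · rw [if_neg hi] at hc
    have key : cq (c₀ / c₁) + jq = cq c₁⁻¹ * x := by
      rw [hx, mul_add, ← mul_assoc, ← cq_mul, ← cq_mul, inv_mul_cancel₀ hc, cq_one, one_mul,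
        inv_mul_eq_div]
    have hn : ‖cq c₁⁻¹ * x‖ ≠ 0 := by
      rw [← key, norm_ne_zero_iff]
      intro h0
      have : (cq (c₀ / c₁) + jq).imJ = 1 := by simp
      rw [h0] at this; simp at this
    refine ⟨((‖cq c₁⁻¹ * x‖⁻¹ : ℝ) : ℂ) * c₁⁻¹,
      mul_ne_zero (Complex.ofReal_ne_zero.mpr (inv_ne_zero hn)) (inv_ne_zero hc), ?_⟩
    rw [sigma', if_neg hi, sigma1, key, cq_real_smul, ← mul_assoc, ← cq_mul]

lemma sigma'_scale (i : Fin 2) {z : ℂ} (c₀ c₁ : ℂ) (hz : z ≠ 0) :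
    sigma' i (z * c₀) (z * c₁) = sigma' i c₀ c₁ := by
  unfold sigma' sigma0 sigma1
  rw [mul_div_mul_left _ _ hz, mul_div_mul_left _ _ hz]


/-- Equivariance of the trivialising map `𝔗_{i,j}` under the circle action: with
`q = b₀ + b₁·j`, `h_θ = (q⁻¹·(cos θ + sin θ·i)·q)·h`, and `(c₀^θ, c₁^θ)` the complex
components of `q·h_θ`, one has `c_i^θ ≠ 0` and
`σ_j(b₀,b₁)·h_θ·σ_i(c₀^θ,c₁^θ)⁻¹ = σ_j(b₀,b₁)·h·σ_i(c₀,c₁)⁻¹·(cos θ + sin θ·i)`. -/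
theorem trivialising_map_equivariant (i j : Fin 2) (h : ℍ[ℝ]) (hh : ‖h‖ = 1)
    (b₀ b₁ : ℂ) (hb : (if j = 0 then b₀ else b₁) ≠ 0) (θ : ℝ)
    (q : ℍ[ℝ]) (hq : q = cq b₀ + cq b₁ * jq)
    (hθ : ℍ[ℝ]) (hhθ : hθ = (q⁻¹ * cq ⟨Real.cos θ, Real.sin θ⟩ * q) * h)
    (hc : (if i = 0 then (comps (q * h)).1 else (comps (q * h)).2) ≠ 0) :
    (if i = 0 then (comps (q * hθ)).1 else (comps (q * hθ)).2) ≠ 0 ∧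
    sigma' j b₀ b₁ * hθ * (sigma' i (comps (q * hθ)).1 (comps (q * hθ)).2)⁻¹ =
      sigma' j b₀ b₁ * h * (sigma' i (comps (q * h)).1 (comps (q * h)).2)⁻¹ *
        cq ⟨Real.cos θ, Real.sin θ⟩ := by
  set z : ℂ := ⟨Real.cos θ, Real.sin θ⟩ with hzdef
  have hz : z ≠ 0 := by
    intro h0
    have h1 : Real.cos θ = 0 := congrArg Complex.re h0
    have h2 : Real.sin θ = 0 := congrArg Complex.im h0
    have := Real.sin_sq_add_cos_sq θ
    rw [h1, h2] at this; norm_num at this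
  have hq0 : q ≠ 0 := by
    intro h0
    rcases eq_or_ne j 0 with rfl | hj
    · rw [if_pos rfl] at hb
      apply hb
      have := congrArg (fun y => (comps y).1) h0
      simp only [h0] at this
      have h1 : (comps q).1 = b₀ := by rw [hq]; simp [comps]
      rw [h0] at h1
      simpa [comps, Complex.ext_iff] using h1.symm
    · rw [if_neg hj] at hb
      apply hb
      have h1 : (comps q).2 = b₁ := by rw [hq]; simp [comps]
      rw [h0] at h1
      simpa [comps, Complex.ext_iff] using h1.symm
  have hh0 : h ≠ 0 := by
    intro h0; rw [h0] at hh; simp at hh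
  have hqh0 : q * h ≠ 0 := mul_ne_zero hq0 hh0
  have hmain : q * hθ = cq z * (q * h) := by
    rw [hhθ]
    calc q * (q⁻¹ * cq z * q * h) = (q * q⁻¹) * (cq z * (q * h)) := by
          simp only [mul_assoc]
      _ = cq z * (q * h) := by rw [mul_inv_cancel₀ hq0, one_mul]
  have hcomps : comps (q * hθ) = (z * (comps (q * h)).1, z * (comps (q * h)).2) := by
    rw [hmain, comps_cq_mul]
  constructor
  · rw [hcomps]
    rcases eq_or_ne i 0 with rfl | hi
    · rw [if_pos rfl] at hc ⊢
      exact mul_ne_zero hz hc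
    · rw [if_neg hi] at hc ⊢
      exact mul_ne_zero hz hc
  · rw [hcomps]
    simp only
    rw [sigma'_scale i _ _ hz]
    obtain ⟨w, hw0, hw⟩ := sigma'_rep j b₀ b₁ q hq hb
    obtain ⟨v, hv0, hv⟩ := sigma'_rep i (comps (q * h)).1 (comps (q * h)).2 (q * h)
      (decomp (q * h)).symm hc
    rw [hw, hv, hhθ, mul_inv_rev]
    calc cq w * q * (q⁻¹ * cq z * q * h) * ((q * h)⁻¹ * (cq v)⁻¹)
        = cq w * ((q * q⁻¹) * (cq z * ((q * h) * (q * h)⁻¹ * (cq v)⁻¹))) := by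
          simp only [mul_assoc]
      _ = cq w * (cq z * (cq v)⁻¹) := by
          rw [mul_inv_cancel₀ hq0, mul_inv_cancel₀ hqh0, one_mul, one_mul]
      _ = cq w * ((cq v)⁻¹ * cq z) := by
          simp only [cq_inv, ← cq_mul]
          exact congrArg cq (by ring)
      _ = cq w * ((q * h) * ((q * h)⁻¹ * ((cq v)⁻¹ * cq z))) := by
          rw [mul_inv_cancel_left₀ hqh0]
      _ = cq w * q * h * ((q * h)⁻¹ * (cq v)⁻¹) * cq z := by
          simp only [mul_assoc]
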